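/- Midpoint-projection error moment estimate for the projected Milstein scheme: let d ∈ ℕ (d ≥ 1), γ ∈ [1,∞) and p ∈ [1,∞). For h ∈ (0,1] define 𝒫_h : ℝ^d → ℝ^d by 𝒫_h(x) := min{1, h^{−1/(2γ)}/‖x‖}·x (with 𝒫_h(0) := 0). Then there exists a constant C > 0 depending only on p (one may take C = 4^{p}) such that for every probability space (Ω, ℱ, ℙ), every h ∈ (0,1] and all measurable ζ, υ : Ω → ℝ^d, E[‖(𝒫_h(ζ)+𝒫_h(υ))/2 − 𝒫_h((ζ+υ)/2)‖^{2p}] ≤ C·h^{4p}·(E[‖ζ‖^{2(4γ+1)p}] + E[‖υ‖^{2(4γ+1)p}]) (all expectations interpreted in [0,∞]). -/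

import Mathlib

open MeasureTheory
open scoped ENNReal

lemma proj_eq_self' {d : ℕ} (x : EuclideanSpace ℝ (Fin d)) {R : ℝ} (hx : ‖x‖ ≤ R) :
    (min 1 (R / ‖x‖)) • x = x := by
  rcases eq_or_ne x 0 with rfl | hx0
  · simp
  · rw [min_eq_left ((one_le_div (norm_pos_iff.mpr hx0)).mpr hx), one_smul]

lemma proj_norm_le' {d : ℕ} (x : EuclideanSpace ℝ (Fin d)) {R : ℝ} (hR : 0 ≤ R) :
    ‖(min 1 (R / ‖x‖)) • x‖ ≤ ‖x‖ := by
  rw [norm_smul, Real.norm_eq_abs,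
    abs_of_nonneg (le_min zero_le_one (div_nonneg hR (norm_nonneg x)))]
  exact mul_le_of_le_one_left (norm_nonneg x) (min_le_left _ _)

lemma real_key' {d : ℕ} (γ p h : ℝ) (hγ : 1 ≤ γ) (hp : 1 ≤ p) (h0 : 0 < h) (h1 : h ≤ 1)
    (x y : EuclideanSpace ℝ (Fin d)) :
    ‖(1 / 2 : ℝ) • ((min 1 (h ^ (-(1 / (2 * γ))) / ‖x‖)) • x
        + (min 1 (h ^ (-(1 / (2 * γ))) / ‖y‖)) • y)
      - (min 1 (h ^ (-(1 / (2 * γ))) / ‖(1 / 2 : ℝ) • (x + y)‖))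
          • ((1 / 2 : ℝ) • (x + y))‖ ^ (2 * p)
    ≤ 4 ^ p * h ^ (4 * p) * (‖x‖ ^ (2 * (4 * γ + 1) * p) + ‖y‖ ^ (2 * (4 * γ + 1) * p)) := by
  set R := h ^ (-(1 / (2 * γ))) with hRdef
  have hγ0 : (0:ℝ) < γ := lt_of_lt_of_le one_pos hγ
  have hp0 : (0:ℝ) < p := lt_of_lt_of_le one_pos hp
  have hRpos : 0 < R := Real.rpow_pos_of_pos h0 _
  have h4p : (0:ℝ) ≤ 4 ^ p := (Real.rpow_pos_of_pos (by norm_num) p).le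
  have hh4p : (0:ℝ) ≤ h ^ (4*p) := (Real.rpow_pos_of_pos h0 _).le
  by_cases hcase : ‖x‖ ≤ R ∧ ‖y‖ ≤ R
  · have hmid : ‖(1 / 2 : ℝ) • (x + y)‖ ≤ R := by
      rw [norm_smul, Real.norm_eq_abs]
      have hne := norm_add_le x y
      have : |(1/2:ℝ)| = 1/2 := by norm_num
      rw [this]
      linarith [hcase.1, hcase.2]
    rw [proj_eq_self' x hcase.1, proj_eq_self' y hcase.2, proj_eq_self' _ hmid,
        sub_self, norm_zero, Real.zero_rpow (by positivity)]
    have := Real.rpow_nonneg (norm_nonneg x) (2 * (4 * γ + 1) * p)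
    have := Real.rpow_nonneg (norm_nonneg y) (2 * (4 * γ + 1) * p)
    positivity
  · push_neg at hcase
    set M := max ‖x‖ ‖y‖ with hM
    have hRM : R < M := by
      rcases le_or_gt ‖x‖ R with hx | hx
      · exact lt_max_of_lt_right (hcase hx)
      · exact lt_max_of_lt_left hx
    have hM0 : 0 < M := hRpos.trans hRM
    have hxM : ‖x‖ ≤ M := le_max_left _ _
    have hyM : ‖y‖ ≤ M := le_max_right _ _
    have habs : |(1/2:ℝ)| = 1/2 := by norm_num
    have hbound : ‖(1 / 2 : ℝ) • ((min 1 (R / ‖x‖)) • x + (min 1 (R / ‖y‖)) • y)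
        - (min 1 (R / ‖(1 / 2 : ℝ) • (x + y)‖)) • ((1 / 2 : ℝ) • (x + y))‖ ≤ 2 * M := by
      have h1' : ‖(1/2:ℝ) • ((min 1 (R/‖x‖)) • x + (min 1 (R/‖y‖)) • y)‖ ≤ M := by
        rw [norm_smul, Real.norm_eq_abs, habs]
        have hadd := norm_add_le ((min 1 (R/‖x‖)) • x) ((min 1 (R/‖y‖)) • y)
        have hx' := proj_norm_le' x hRpos.le
        have hy' := proj_norm_le' y hRpos.le
        linarith
      have h2' : ‖(min 1 (R/‖(1/2:ℝ)•(x+y)‖)) • ((1/2:ℝ)•(x+y))‖ ≤ M := by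
        refine (proj_norm_le' _ hRpos.le).trans ?_
        rw [norm_smul, Real.norm_eq_abs, habs]
        have := norm_add_le x y
        linarith
      calc ‖_ - _‖ ≤ _ + _ := norm_sub_le _ _
        _ ≤ 2*M := by linarith
    have e1 : ‖(1 / 2 : ℝ) • ((min 1 (R / ‖x‖)) • x + (min 1 (R / ‖y‖)) • y)
        - (min 1 (R / ‖(1 / 2 : ℝ) • (x + y)‖)) • ((1 / 2 : ℝ) • (x + y))‖ ^ (2*p)
        ≤ (2*M) ^ (2*p) :=
      Real.rpow_le_rpow (norm_nonneg _) hbound (by positivity)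
    have e2 : (2*M) ^ (2*p) = 4^p * M^(2*p) := by
      rw [Real.mul_rpow (by norm_num) hM0.le]
      congr 1
      rw [show (2:ℝ) * p = 2 * p from rfl, Real.rpow_mul (by norm_num : (0:ℝ) ≤ 2)]
      norm_num
    have hRpow : h ^ (4*p) * R ^ (8*γ*p) = 1 := by
      rw [hRdef, ← Real.rpow_mul h0.le, ← Real.rpow_add h0,
        show 4*p + -(1/(2*γ)) * (8*γ*p) = 0 from by field_simp; ring, Real.rpow_zero]
    have e3 : M ^ (2*p) ≤ h^(4*p) * M^(2*(4*γ+1)*p) := by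
      have h8 : R ^ (8*γ*p) ≤ M ^ (8*γ*p) :=
        Real.rpow_le_rpow hRpos.le hRM.le (by positivity)
      have h1' : 1 ≤ h^(4*p) * M^(8*γ*p) := by
        calc (1:ℝ) = h^(4*p) * R^(8*γ*p) := hRpow.symm
          _ ≤ h^(4*p) * M^(8*γ*p) := mul_le_mul_of_nonneg_left h8 hh4p
      calc M^(2*p) = M^(2*p) * 1 := by ring
        _ ≤ M^(2*p) * (h^(4*p) * M^(8*γ*p)) :=
            mul_le_mul_of_nonneg_left h1' (Real.rpow_nonneg hM0.le _)
        _ = h^(4*p) * (M^(2*p) * M^(8*γ*p)) := by ring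
        _ = h^(4*p) * M^(2*(4*γ+1)*p) := by
            rw [← Real.rpow_add hM0, show 2*p + 8*γ*p = 2*(4*γ+1)*p from by ring]
    have e4 : M ^ (2*(4*γ+1)*p) ≤ ‖x‖^(2*(4*γ+1)*p) + ‖y‖^(2*(4*γ+1)*p) := by
      rcases max_cases ‖x‖ ‖y‖ with ⟨hm, _⟩ | ⟨hm, _⟩
      · rw [hM, hm]; exact le_add_of_nonneg_right (Real.rpow_nonneg (norm_nonneg _) _)
      · rw [hM, hm]; exact le_add_of_nonneg_left (Real.rpow_nonneg (norm_nonneg _) _)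
    calc ‖(1 / 2 : ℝ) • ((min 1 (R / ‖x‖)) • x + (min 1 (R / ‖y‖)) • y)
        - (min 1 (R / ‖(1 / 2 : ℝ) • (x + y)‖)) • ((1 / 2 : ℝ) • (x + y))‖ ^ (2*p)
        ≤ (2*M)^(2*p) := e1
      _ = 4^p * M^(2*p) := e2
      _ ≤ 4^p * (h^(4*p) * M^(2*(4*γ+1)*p)) := mul_le_mul_of_nonneg_left e3 h4p
      _ ≤ 4 ^ p * h ^ (4 * p) * (‖x‖ ^ (2 * (4 * γ + 1) * p) + ‖y‖ ^ (2 * (4 * γ + 1) * p)) := by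
          rw [← mul_assoc]
          exact mul_le_mul_of_nonneg_left e4 (mul_nonneg h4p hh4p)

/-- Midpoint-projection error moment estimate for the projected Milstein scheme. -/
theorem midpoint_projection_error_moment_estimate
    (d : ℕ) (hd : 1 ≤ d) (γ p : ℝ) (hγ : 1 ≤ γ) (hp : 1 ≤ p) :
    ∃ C : ℝ, 0 < C ∧
      ∀ (Ω : Type) [MeasurableSpace Ω] (ℙ : Measure Ω) [IsProbabilityMeasure ℙ],
      ∀ h : ℝ, 0 < h → h ≤ 1 →
      ∀ ζ υ : Ω → EuclideanSpace ℝ (Fin d), Measurable ζ → Measurable υ →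
        (∫⁻ ω, (‖(1 / 2 : ℝ) • ((min 1 (h ^ (-(1 / (2 * γ))) / ‖ζ ω‖)) • ζ ω
              + (min 1 (h ^ (-(1 / (2 * γ))) / ‖υ ω‖)) • υ ω)
            - (min 1 (h ^ (-(1 / (2 * γ))) / ‖(1 / 2 : ℝ) • (ζ ω + υ ω)‖))
                • ((1 / 2 : ℝ) • (ζ ω + υ ω))‖₊ : ℝ≥0∞) ^ (2 * p) ∂ℙ)
          ≤ ENNReal.ofReal (C * h ^ (4 * p))
            * ((∫⁻ ω, (‖ζ ω‖₊ : ℝ≥0∞) ^ (2 * (4 * γ + 1) * p) ∂ℙ)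
              + ∫⁻ ω, (‖υ ω‖₊ : ℝ≥0∞) ^ (2 * (4 * γ + 1) * p) ∂ℙ) := by
  refine ⟨4 ^ p, Real.rpow_pos_of_pos (by norm_num) p, ?_⟩
  intro Ω _ ℙ _ h h0 h1 ζ υ hζ hυ
  have hp0 : (0:ℝ) < p := lt_of_lt_of_le one_pos hp
  have key : ∀ ω : Ω, (‖(1 / 2 : ℝ) • ((min 1 (h ^ (-(1 / (2 * γ))) / ‖ζ ω‖)) • ζ ω
              + (min 1 (h ^ (-(1 / (2 * γ))) / ‖υ ω‖)) • υ ω)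
            - (min 1 (h ^ (-(1 / (2 * γ))) / ‖(1 / 2 : ℝ) • (ζ ω + υ ω)‖))
                • ((1 / 2 : ℝ) • (ζ ω + υ ω))‖₊ : ℝ≥0∞) ^ (2 * p)
      ≤ ENNReal.ofReal (4 ^ p * h ^ (4 * p)) *
          ((‖ζ ω‖₊ : ℝ≥0∞) ^ (2 * (4 * γ + 1) * p) + (‖υ ω‖₊ : ℝ≥0∞) ^ (2 * (4 * γ + 1) * p)) := by
    intro ω
    have hr := real_key' γ p h hγ hp h0 h1 (ζ ω) (υ ω)
    simp only [← enorm_eq_nnnorm]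
    rw [← ofReal_norm, ← ofReal_norm, ← ofReal_norm,
        ENNReal.ofReal_rpow_of_nonneg (norm_nonneg _) (by positivity),
        ENNReal.ofReal_rpow_of_nonneg (norm_nonneg _) (by positivity),
        ENNReal.ofReal_rpow_of_nonneg (norm_nonneg _) (by positivity),
        ← ENNReal.ofReal_add (Real.rpow_nonneg (norm_nonneg _) _)
            (Real.rpow_nonneg (norm_nonneg _) _),
        ← ENNReal.ofReal_mul (mul_nonneg (Real.rpow_pos_of_pos (by norm_num) p).le
            (Real.rpow_pos_of_pos h0 _).le)]
    exact ENNReal.ofReal_le_ofReal hr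
  have hfζ : Measurable fun ω => (‖ζ ω‖₊ : ℝ≥0∞) ^ (2 * (4 * γ + 1) * p) := by fun_prop
  have hfυ : Measurable fun ω => (‖υ ω‖₊ : ℝ≥0∞) ^ (2 * (4 * γ + 1) * p) := by fun_prop
  calc (∫⁻ ω, (‖(1 / 2 : ℝ) • ((min 1 (h ^ (-(1 / (2 * γ))) / ‖ζ ω‖)) • ζ ω
              + (min 1 (h ^ (-(1 / (2 * γ))) / ‖υ ω‖)) • υ ω)
            - (min 1 (h ^ (-(1 / (2 * γ))) / ‖(1 / 2 : ℝ) • (ζ ω + υ ω)‖))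
                • ((1 / 2 : ℝ) • (ζ ω + υ ω))‖₊ : ℝ≥0∞) ^ (2 * p) ∂ℙ)
      ≤ ∫⁻ ω, ENNReal.ofReal (4 ^ p * h ^ (4 * p)) *
          ((‖ζ ω‖₊ : ℝ≥0∞) ^ (2 * (4 * γ + 1) * p) + (‖υ ω‖₊ : ℝ≥0∞) ^ (2 * (4 * γ + 1) * p)) ∂ℙ :=
        lintegral_mono key
    _ = ENNReal.ofReal (4 ^ p * h ^ (4 * p)) *
          ∫⁻ ω, ((‖ζ ω‖₊ : ℝ≥0∞) ^ (2 * (4 * γ + 1) * p)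
            + (‖υ ω‖₊ : ℝ≥0∞) ^ (2 * (4 * γ + 1) * p)) ∂ℙ :=
        lintegral_const_mul' _ _ ENNReal.ofReal_ne_top
    _ = ENNReal.ofReal (4 ^ p * h ^ (4 * p)) *
          ((∫⁻ ω, (‖ζ ω‖₊ : ℝ≥0∞) ^ (2 * (4 * γ + 1) * p) ∂ℙ)
            + ∫⁻ ω, (‖υ ω‖₊ : ℝ≥0∞) ^ (2 * (4 * γ + 1) * p) ∂ℙ) := by
        rw [lintegral_add_left hfζ]
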